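/- Explicit value of the radial derivative integral in dimension 3: for α ∈ (0, 2) and any x ∈ S² ⊂ ℝ³, the integral I^{3,α} := ∫_{B₁} ⟨x − y, x⟩ / |x − y|^{α+2} dy equals 2π · 2^{2−α} / ((4−α)(2−α)). -/

import Mathlib

open MeasureTheory Metric
open Set intervalIntegral
open scoped RealInnerProductSpace

lemma ftc_aux (b : ℝ) (hb : 0 < b) (R : ℝ) (hR : 0 ≤ R) (β : ℝ) (hβ : β ≠ 1) :
    ∫ r in (0:ℝ)..R, r * (b + r ^ 2) ^ (-β) =
      ((b + R ^ 2) ^ (1 - β) - b ^ (1 - β)) / (2 * (1 - β)) := by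
  have hpos : ∀ r : ℝ, 0 < b + r ^ 2 := fun r => by positivity
  have hderiv : ∀ r : ℝ, HasDerivAt (fun r : ℝ => (b + r ^ 2) ^ (1 - β) / (2 * (1 - β)))
      (r * (b + r ^ 2) ^ (-β)) r := by
    intro r
    have h1 : HasDerivAt (fun r : ℝ => b + r ^ 2) (2 * r) r := by
      simpa using (hasDerivAt_pow 2 r).const_add b
    have h2 := (h1.rpow_const (p := 1 - β) (Or.inl (hpos r).ne')).div_const (2 * (1 - β))
    refine h2.congr_deriv ?_
    symm
    have : (1 - β) - 1 = -β := by ring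
    rw [this, eq_div_iff (mul_ne_zero two_ne_zero (sub_ne_zero.mpr hβ.symm))]
    ring
  have hcont : Continuous fun r : ℝ => r * (b + r ^ 2) ^ (-β) :=
    continuous_id.mul ((continuous_const.add (continuous_pow 2)).rpow_const
      (fun r => Or.inl (hpos r).ne'))
  rw [integral_eq_sub_of_hasDerivAt (fun r _ => hderiv r) (hcont.intervalIntegrable _ _)]
  ring

open Real in
lemma slice_eval (α : ℝ) (h0 : 0 < α) (h2 : α < 2) (t : ℝ) :
    (∫ z : ℝ × ℝ, Set.indicator {p : ℝ × ℝ × ℝ | p.1 ^ 2 + p.2.1 ^ 2 + p.2.2 ^ 2 < 1}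
      (fun p => (1 - p.1) * ((1 - p.1) ^ 2 + p.2.1 ^ 2 + p.2.2 ^ 2) ^ (-((α + 2) / 2))) (t, z))
    = Set.indicator (Ioo (-1 : ℝ) 1)
        (fun t => 2 * π / α * ((1 - t) ^ (1 - α) - 2 ^ (-(α / 2)) * (1 - t) ^ (1 - α / 2))) t := by
  have hrew : ∀ z : ℝ × ℝ,
      Set.indicator {p : ℝ × ℝ × ℝ | p.1 ^ 2 + p.2.1 ^ 2 + p.2.2 ^ 2 < 1}
        (fun p => (1 - p.1) * ((1 - p.1) ^ 2 + p.2.1 ^ 2 + p.2.2 ^ 2) ^ (-((α + 2) / 2))) (t, z)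
      = Set.indicator {z : ℝ × ℝ | z.1 ^ 2 + z.2 ^ 2 < 1 - t ^ 2}
          (fun z => (1 - t) * ((1 - t) ^ 2 + z.1 ^ 2 + z.2 ^ 2) ^ (-((α + 2) / 2))) z := by
    intro z
    by_cases h : z ∈ {z : ℝ × ℝ | z.1 ^ 2 + z.2 ^ 2 < 1 - t ^ 2}
    · have h' : (t, z) ∈ {p : ℝ × ℝ × ℝ | p.1 ^ 2 + p.2.1 ^ 2 + p.2.2 ^ 2 < 1} := by
        simp only [Set.mem_setOf_eq] at h ⊢; linarith
      rw [Set.indicator_of_mem h _, Set.indicator_of_mem h' _]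
    · have h' : (t, z) ∉ {p : ℝ × ℝ × ℝ | p.1 ^ 2 + p.2.1 ^ 2 + p.2.2 ^ 2 < 1} := by
        simp only [Set.mem_setOf_eq] at h ⊢; intro hc; exact h (by linarith)
      rw [Set.indicator_of_notMem h _, Set.indicator_of_notMem h' _]
  simp only [hrew]
  by_cases ht : t ∈ Ioo (-1 : ℝ) 1
  swap
  · have hempty : {z : ℝ × ℝ | z.1 ^ 2 + z.2 ^ 2 < 1 - t ^ 2} = ∅ := by
      have h1 : (1 : ℝ) ≤ t ^ 2 := by
        simp only [Set.mem_Ioo, not_and_or, not_lt] at ht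
        rcases ht with h | h
        · nlinarith
        · nlinarith
      ext z; simp only [Set.mem_setOf_eq, Set.mem_empty_iff_false, iff_false, not_lt]
      nlinarith [sq_nonneg z.1, sq_nonneg z.2]
    rw [hempty, Set.indicator_of_notMem ht]
    simp
  rw [Set.indicator_of_mem ht]
  obtain ⟨ht1, ht2⟩ := ht
  set c : ℝ := 1 - t with hc_def
  have hc : 0 < c := by simp only [hc_def]; linarith
  set R : ℝ := Real.sqrt (1 - t ^ 2) with hR_def
  have h1t : (0:ℝ) < 1 - t ^ 2 := by nlinarith
  have hR2 : R ^ 2 = 1 - t ^ 2 := Real.sq_sqrt h1t.le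
  have hRpos : 0 ≤ R := Real.sqrt_nonneg _
  set β : ℝ := (α + 2) / 2 with hβ_def
  have hβ : β ≠ 1 := by
    simp only [hβ_def]; intro h; apply h0.ne'
    have := (div_eq_one_iff_eq (two_ne_zero (α := ℝ))).mp h
    linarith
  set f : ℝ × ℝ → ℝ := Set.indicator {z : ℝ × ℝ | z.1 ^ 2 + z.2 ^ 2 < 1 - t ^ 2}
      (fun z => c * (c ^ 2 + z.1 ^ 2 + z.2 ^ 2) ^ (-β)) with hf_def
  set φ : ℝ → ℝ := Set.indicator {r : ℝ | r ^ 2 < 1 - t ^ 2}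
      (fun r => r * (c * (c ^ 2 + r ^ 2) ^ (-β))) with hφ_def
  have key : ∀ p : ℝ × ℝ, p.1 • f (polarCoord.symm p) = φ p.1 * (1 : ℝ) := by
    rintro ⟨r, θ⟩
    have hsq : (r * Real.cos θ) ^ 2 + (r * Real.sin θ) ^ 2 = r ^ 2 := by
      linear_combination r ^ 2 * Real.sin_sq_add_cos_sq θ
    have hbase : c ^ 2 + (r * Real.cos θ) ^ 2 + (r * Real.sin θ) ^ 2 = c ^ 2 + r ^ 2 := by
      rw [add_assoc, hsq]
    simp only [polarCoord_symm_apply, smul_eq_mul, mul_one, hf_def, hφ_def]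
    by_cases h : r ^ 2 < 1 - t ^ 2
    · rw [Set.indicator_of_mem (by simpa [hsq] using h), Set.indicator_of_mem (by exact h)]
      rw [hbase]
    · rw [Set.indicator_of_notMem (by simpa [hsq] using h), Set.indicator_of_notMem (by exact h)]
      simp
  calc ∫ z : ℝ × ℝ, f z
      = ∫ p in polarCoord.target, p.1 • f (polarCoord.symm p) :=
        (integral_comp_polarCoord_symm f).symm
    _ = ∫ p in Ioi (0:ℝ) ×ˢ Ioo (-Real.pi) Real.pi, φ p.1 * (fun _ : ℝ => (1:ℝ)) p.2 := by
        rw [polarCoord_target]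
        exact setIntegral_congr_fun (measurableSet_Ioi.prod measurableSet_Ioo)
          (fun p _ => key p)
    _ = (∫ r in Ioi (0:ℝ), φ r) * ∫ θ in Ioo (-Real.pi) Real.pi, (1:ℝ) := by
        rw [Measure.volume_eq_prod, ← Measure.prod_restrict]
        exact integral_prod_mul φ (fun _ => (1:ℝ))
    _ = (∫ r in Ioi (0:ℝ), φ r) * (2 * Real.pi) := by
        rw [setIntegral_const, Real.volume_real_Ioo_of_le (by linarith [Real.pi_pos]), smul_eq_mul,
          mul_one]
        ring_nf
    _ = (∫ r in Ioo (0:ℝ) R, r * (c * (c ^ 2 + r ^ 2) ^ (-β))) * (2 * Real.pi) := by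
        congr 1
        rw [hφ_def, MeasureTheory.integral_indicator (measurableSet_lt (by fun_prop) (by fun_prop)),
          Measure.restrict_restrict (measurableSet_lt (by fun_prop) (by fun_prop))]
        have hset : {r : ℝ | r ^ 2 < 1 - t ^ 2} ∩ Ioi (0:ℝ) = Ioo (0:ℝ) R := by
          ext r
          constructor
          · rintro ⟨hlt, hpos⟩
            exact ⟨hpos, (Real.lt_sqrt (le_of_lt hpos)).mpr hlt⟩
          · rintro ⟨hpos, hlt⟩
            exact ⟨(Real.lt_sqrt (le_of_lt hpos)).mp hlt, hpos⟩
        rw [hset]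
    _ = (c * (((c ^ 2 + R ^ 2) ^ (1 - β) - (c ^ 2) ^ (1 - β)) / (2 * (1 - β)))) * (2 * Real.pi) := by
        congr 1
        rw [← integral_Ioc_eq_integral_Ioo, ← intervalIntegral.integral_of_le hRpos,
          ← ftc_aux (c ^ 2) (by positivity) R hRpos β hβ, ← intervalIntegral.integral_const_mul]
        exact intervalIntegral.integral_congr (fun r _ => by ring)
    _ = 2 * Real.pi / α * ((1 - t) ^ (1 - α) - 2 ^ (-(α / 2)) * (1 - t) ^ (1 - α / 2)) := by
        have e1 : c ^ 2 + R ^ 2 = 2 * c := by rw [hR2]; simp only [hc_def]; ring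
        have e2 : (1:ℝ) - β = -(α / 2) := by simp only [hβ_def]; ring
        have e3 : ((c:ℝ) ^ 2) ^ (-(α / 2)) = c ^ (-α) := by
          rw [← Real.rpow_natCast c 2, ← Real.rpow_mul hc.le]
          congr 1
          push_cast
          ring
        have e4 : ((2:ℝ) * c) ^ (-(α / 2)) = 2 ^ (-(α / 2)) * c ^ (-(α / 2)) :=
          Real.mul_rpow (by norm_num) hc.le
        have e5 : c * c ^ (-α) = c ^ (1 - α) := by
          rw [sub_eq_add_neg, Real.rpow_add hc, Real.rpow_one]
        have e6 : c * c ^ (-(α / 2)) = c ^ (1 - α / 2) := by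
          rw [show (1:ℝ) - α / 2 = 1 + -(α / 2) by ring, Real.rpow_add hc, Real.rpow_one]
        have e2' : 2 * ((1:ℝ) - β) = -α := by simp only [hβ_def]; ring
        rw [e1, e2', e2, e3, e4, ← hc_def, ← e5, ← e6]
        field_simp [h0.ne']
        ring

open Real in
lemma outer_eval (α : ℝ) (h0 : 0 < α) (h2 : α < 2) :
    (∫ t in Ioo (-1 : ℝ) 1,
        2 * π / α * ((1 - t) ^ (1 - α) - 2 ^ (-(α / 2)) * (1 - t) ^ (1 - α / 2)))
    = 2 * π * 2 ^ (2 - α) / ((4 - α) * (2 - α)) := by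
  have hJ1 : IntervalIntegrable (fun t : ℝ => (1 - t) ^ (1 - α)) volume (-1) 1 := by
    have h := (intervalIntegral.intervalIntegrable_rpow' (a := 0) (b := 2)
      (by linarith : (-1:ℝ) < 1 - α)).comp_sub_left 1
    norm_num at h
    exact h.symm
  have hJ2 : IntervalIntegrable (fun t : ℝ => (1 - t) ^ (1 - α / 2)) volume (-1) 1 := by
    have h := (intervalIntegral.intervalIntegrable_rpow' (a := 0) (b := 2)
      (by linarith : (-1:ℝ) < 1 - α / 2)).comp_sub_left 1
    norm_num at h
    exact h.symm
  have hI1 : (∫ t in (-1 : ℝ)..1, (1 - t) ^ (1 - α)) = 2 ^ (2 - α) / (2 - α) := by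
    rw [intervalIntegral.integral_comp_sub_left (fun s : ℝ => s ^ (1 - α)) 1]
    norm_num
    rw [integral_rpow (Or.inl (by linarith : (-1:ℝ) < 1 - α))]
    rw [Real.zero_rpow (by intro h; nlinarith [h] : (1:ℝ) - α + 1 ≠ 0)]
    rw [show (1:ℝ) - α + 1 = 2 - α by ring]
    ring
  have hI2 : (∫ t in (-1 : ℝ)..1, (1 - t) ^ (1 - α / 2)) = 2 ^ (2 - α / 2) / (2 - α / 2) := by
    rw [intervalIntegral.integral_comp_sub_left (fun s : ℝ => s ^ (1 - α / 2)) 1]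
    norm_num
    rw [integral_rpow (Or.inl (by linarith : (-1:ℝ) < 1 - α / 2))]
    rw [Real.zero_rpow (by intro h; nlinarith [h] : (1:ℝ) - α / 2 + 1 ≠ 0)]
    rw [show (1:ℝ) - α / 2 + 1 = 2 - α / 2 by ring]
    ring
  rw [← integral_Ioc_eq_integral_Ioo, ← intervalIntegral.integral_of_le (by norm_num : (-1:ℝ) ≤ 1)]
  rw [intervalIntegral.integral_const_mul]
  rw [intervalIntegral.integral_sub hJ1 (hJ2.const_mul _)]
  rw [intervalIntegral.integral_const_mul, hI1, hI2]
  have hpow : (2:ℝ) ^ (-(α / 2)) * 2 ^ (2 - α / 2) = 2 ^ (2 - α) := by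
    rw [← Real.rpow_add (by norm_num : (0:ℝ) < 2)]
    ring_nf
  rw [mul_div_assoc, ← mul_div_assoc (2 ^ (-(α / 2)) : ℝ), hpow]
  have h4 : (4:ℝ) - α ≠ 0 := by linarith
  have h2' : (2:ℝ) - α ≠ 0 := by linarith
  have h2'' : (2:ℝ) - α / 2 ≠ 0 := by linarith
  have hk : (4 - α)⁻¹ * (4 - α) = 1 := inv_mul_cancel₀ h4
  field_simp [h4, h2', h2'']
  rw [show (2:ℝ) ^ 2 - α = 4 - α by norm_num, sub_mul, div_mul_cancel₀ _ h4]
  ring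

open Real in
lemma prod_eval (α : ℝ) (h0 : 0 < α) (h2 : α < 2) :
    (∫ p : ℝ × ℝ × ℝ, Set.indicator {p : ℝ × ℝ × ℝ | p.1 ^ 2 + p.2.1 ^ 2 + p.2.2 ^ 2 < 1}
      (fun p => (1 - p.1) * ((1 - p.1) ^ 2 + p.2.1 ^ 2 + p.2.2 ^ 2) ^ (-((α + 2) / 2))) p)
    = 2 * π * 2 ^ (2 - α) / ((4 - α) * (2 - α)) := by
  set β : ℝ := (α + 2) / 2 with hβ_def
  set S : Set (ℝ × ℝ × ℝ) := {p | p.1 ^ 2 + p.2.1 ^ 2 + p.2.2 ^ 2 < 1} with hS_def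
  set G : ℝ × ℝ × ℝ → ℝ := fun p => (1 - p.1) * ((1 - p.1) ^ 2 + p.2.1 ^ 2 + p.2.2 ^ 2) ^ (-β)
    with hG_def
  have hS : MeasurableSet S := measurableSet_lt (by fun_prop) measurable_const
  have hGmeas : Measurable G := by fun_prop
  have hmeas : Measurable (Set.indicator S G) := hGmeas.indicator hS
  have hnonneg : ∀ p, 0 ≤ Set.indicator S G p := by
    intro p
    apply Set.indicator_nonneg
    intro p hp
    simp only [hS_def, Set.mem_setOf_eq] at hp
    have h1 : p.1 ^ 2 < 1 := by nlinarith [sq_nonneg p.2.1, sq_nonneg p.2.2]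
    have : (0:ℝ) ≤ 1 - p.1 := by nlinarith
    exact mul_nonneg this (Real.rpow_nonneg (by nlinarith [sq_nonneg (1 - p.1)]) _)
  -- slice integrability for every t
  have hslice : ∀ t : ℝ, Integrable (fun z : ℝ × ℝ => Set.indicator S G (t, z)) := by
    intro t
    by_cases ht : t ∈ Ioo (-1:ℝ) 1
    swap
    · have hzero : (fun z : ℝ × ℝ => Set.indicator S G (t, z)) = fun _ => 0 := by
        funext z
        apply Set.indicator_of_notMem
        simp only [hS_def, Set.mem_setOf_eq, not_lt]
        have h1 : (1:ℝ) ≤ t ^ 2 := by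
          simp only [Set.mem_Ioo, not_and_or, not_lt] at ht
          rcases ht with h | h <;> nlinarith
        nlinarith [sq_nonneg z.1, sq_nonneg z.2]
      rw [hzero]
      exact integrable_zero _ _ _
    · obtain ⟨ht1, ht2⟩ := ht
      have hc : (0:ℝ) < 1 - t := by linarith
      have heq : (fun z : ℝ × ℝ => Set.indicator S G (t, z)) =
          Set.indicator {z : ℝ × ℝ | z.1 ^ 2 + z.2 ^ 2 < 1 - t ^ 2}
            (fun z => (1 - t) * ((1 - t) ^ 2 + z.1 ^ 2 + z.2 ^ 2) ^ (-β)) := by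
        funext z
        by_cases h : z ∈ {z : ℝ × ℝ | z.1 ^ 2 + z.2 ^ 2 < 1 - t ^ 2}
        · have hz : z.1 ^ 2 + z.2 ^ 2 < 1 - t ^ 2 := h
          have h' : (t, z) ∈ S := by
            show t ^ 2 + z.1 ^ 2 + z.2 ^ 2 < 1
            linarith
          rw [Set.indicator_of_mem h _, Set.indicator_of_mem h' _]
        · have h' : (t, z) ∉ S := by
            intro hcon
            have hz : t ^ 2 + z.1 ^ 2 + z.2 ^ 2 < 1 := hcon
            exact h (show z.1 ^ 2 + z.2 ^ 2 < 1 - t ^ 2 by linarith)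
          rw [Set.indicator_of_notMem h _, Set.indicator_of_notMem h' _]
      rw [heq]
      apply MeasureTheory.IntegrableOn.integrable_indicator _
        (measurableSet_lt (by fun_prop) measurable_const)
      refine Measure.integrableOn_of_bounded
        (M := (1 - t) * ((1 - t) ^ 2) ^ (-β)) ?_ ?_ ?_
      · apply ne_of_lt
        apply lt_of_le_of_lt (measure_mono ?_) (measure_ball_lt_top (x := (0:ℝ×ℝ)) (r := 1))
        intro z hz
        simp only [Set.mem_setOf_eq] at hz
        have hz1 : z.1 ^ 2 < 1 := by nlinarith [sq_nonneg z.2, sq_nonneg t]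
        have hz2 : z.2 ^ 2 < 1 := by nlinarith [sq_nonneg z.1, sq_nonneg t]
        have : |z.1| < 1 := (sq_lt_one_iff_abs_lt_one _).mp hz1
        have : |z.2| < 1 := (sq_lt_one_iff_abs_lt_one _).mp hz2
        rw [mem_ball_zero_iff, Prod.norm_def]
        simp only [Real.norm_eq_abs, max_lt_iff]
        constructor <;> assumption
      · exact (by fun_prop : Measurable fun z : ℝ × ℝ =>
          (1 - t) * ((1 - t) ^ 2 + z.1 ^ 2 + z.2 ^ 2) ^ (-β)).aestronglyMeasurable
      · apply ae_of_all
        intro z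
        rw [Real.norm_of_nonneg (mul_nonneg hc.le (Real.rpow_nonneg (by positivity) _))]
        apply mul_le_mul_of_nonneg_left _ hc.le
        apply Real.rpow_le_rpow_of_nonpos (by positivity) (by nlinarith [sq_nonneg z.1, sq_nonneg z.2])
        simp only [hβ_def]
        linarith
  have hinner : ∀ t : ℝ, (∫ z : ℝ × ℝ, Set.indicator S G (t, z)) =
      Set.indicator (Ioo (-1 : ℝ) 1)
        (fun t => 2 * π / α * ((1 - t) ^ (1 - α) - 2 ^ (-(α / 2)) * (1 - t) ^ (1 - α / 2))) t :=
    fun t => slice_eval α h0 h2 t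
  have hAint : Integrable (Set.indicator (Ioo (-1 : ℝ) 1)
      (fun t => 2 * π / α * ((1 - t) ^ (1 - α) - 2 ^ (-(α / 2)) * (1 - t) ^ (1 - α / 2)))) := by
    apply MeasureTheory.IntegrableOn.integrable_indicator _ measurableSet_Ioo
    have hJ1 : IntervalIntegrable (fun t : ℝ => (1 - t) ^ (1 - α)) volume (-1) 1 := by
      have h := (intervalIntegral.intervalIntegrable_rpow' (a := 0) (b := 2)
        (by linarith : (-1:ℝ) < 1 - α)).comp_sub_left 1
      norm_num at h
      exact h.symm
    have hJ2 : IntervalIntegrable (fun t : ℝ => (1 - t) ^ (1 - α / 2)) volume (-1) 1 := by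
      have h := (intervalIntegral.intervalIntegrable_rpow' (a := 0) (b := 2)
        (by linarith : (-1:ℝ) < 1 - α / 2)).comp_sub_left 1
      norm_num at h
      exact h.symm
    have := (hJ1.sub (hJ2.const_mul (2 ^ (-(α / 2)) : ℝ))).const_mul (2 * π / α)
    rw [intervalIntegrable_iff_integrableOn_Ioc_of_le (by norm_num : (-1:ℝ) ≤ 1)] at this
    exact this.mono_set Ioo_subset_Ioc_self
  have hInt : Integrable (Set.indicator S G) := by
    rw [Measure.volume_eq_prod]
    rw [MeasureTheory.integrable_prod_iff (hmeas.aestronglyMeasurable)]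
    constructor
    · exact ae_of_all _ hslice
    · have : (fun t : ℝ => ∫ z : ℝ × ℝ, ‖Set.indicator S G (t, z)‖) =
          Set.indicator (Ioo (-1 : ℝ) 1)
            (fun t => 2 * π / α * ((1 - t) ^ (1 - α) - 2 ^ (-(α / 2)) * (1 - t) ^ (1 - α / 2))) := by
        funext t
        rw [← hinner t]
        congr 1
        funext z
        exact Real.norm_of_nonneg (hnonneg _)
      rw [this]
      exact hAint
  calc (∫ p : ℝ × ℝ × ℝ, Set.indicator S G p)
      = ∫ t : ℝ, ∫ z : ℝ × ℝ, Set.indicator S G (t, z) := by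
        rw [Measure.volume_eq_prod] at hInt ⊢
        exact MeasureTheory.integral_prod _ hInt
    _ = ∫ t : ℝ, Set.indicator (Ioo (-1 : ℝ) 1)
          (fun t => 2 * π / α * ((1 - t) ^ (1 - α) - 2 ^ (-(α / 2)) * (1 - t) ^ (1 - α / 2))) t := by
        exact integral_congr_ae (ae_of_all _ hinner)
    _ = ∫ t in Ioo (-1 : ℝ) 1,
          2 * π / α * ((1 - t) ^ (1 - α) - 2 ^ (-(α / 2)) * (1 - t) ^ (1 - α / 2)) :=
        MeasureTheory.integral_indicator measurableSet_Ioo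
    _ = 2 * π * 2 ^ (2 - α) / ((4 - α) * (2 - α)) := outer_eval α h0 h2

/-- explicit value of `I^{3,α} = ∫_{B₁} ⟨x-y,x⟩/|x-y|^{α+2} dy` for any unit
vector `x` in `ℝ³` and `α ∈ (0,2)`. -/
theorem radial_integral_dim3
    (α : ℝ) (h0 : 0 < α) (h2 : α < 2) (x : EuclideanSpace ℝ (Fin 3)) (hx : ‖x‖ = 1) :
    (∫ y in Metric.ball (0 : EuclideanSpace ℝ (Fin 3)) 1, ⟪x - y, x⟫ / ‖x - y‖ ^ (α + 2)) =
      2 * Real.pi * 2 ^ (2 - α) / ((4 - α) * (2 - α)) := by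
  classical
  set x₀ : EuclideanSpace ℝ (Fin 3) := EuclideanSpace.single (0 : Fin 3) (1 : ℝ) with hx₀_def
  have hx₀ : ‖x₀‖ = 1 := by
    rw [hx₀_def, EuclideanSpace.norm_single]
    norm_num
  -- Step A: reduce to x₀
  have hred : (∫ y in Metric.ball (0 : EuclideanSpace ℝ (Fin 3)) 1, ⟪x - y, x⟫ / ‖x - y‖ ^ (α + 2)) =
      ∫ y in Metric.ball (0 : EuclideanSpace ℝ (Fin 3)) 1, ⟪x₀ - y, x₀⟫ / ‖x₀ - y‖ ^ (α + 2) := by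
    set e : EuclideanSpace ℝ (Fin 3) ≃ₗᵢ[ℝ] EuclideanSpace ℝ (Fin 3) := Submodule.reflection (ℝ ∙ (x₀ - x))ᗮ with he_def
    have hex : e x₀ = x := Submodule.reflection_sub (by rw [hx₀, hx])
    have hmp : MeasurePreserving e volume volume := e.measurePreserving
    have hemb : MeasurableEmbedding e := e.toHomeomorph.measurableEmbedding
    have hpre : ⇑e ⁻¹' Metric.ball (0 : EuclideanSpace ℝ (Fin 3)) 1 = Metric.ball (0 : EuclideanSpace ℝ (Fin 3)) 1 := by
      ext y
      simp [Metric.mem_ball, dist_zero_right, e.norm_map]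
    have := hmp.setIntegral_preimage_emb hemb
      (fun y => ⟪x - y, x⟫ / ‖x - y‖ ^ (α + 2)) (Metric.ball (0 : EuclideanSpace ℝ (Fin 3)) 1)
    rw [hpre] at this
    rw [← this]
    refine setIntegral_congr_fun measurableSet_ball (fun y _ => ?_)
    have h1 : x - e y = e (x₀ - y) := by rw [map_sub, hex]
    rw [h1, e.norm_map]
    have h2 : ⟪e (x₀ - y), x⟫ = ⟪x₀ - y, x₀⟫ := by
      conv_lhs => rw [← hex]
      exact e.inner_map_map _ _
    rw [h2]
  rw [hred]
  -- Step B: transfer to ℝ × ℝ × ℝ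
  set F : EuclideanSpace ℝ (Fin 3) ≃ᵐ ℝ × ℝ × ℝ :=
    (MeasurableEquiv.toLp 2 (Fin 3 → ℝ)).symm.trans
      ((MeasurableEquiv.piFinSuccAbove (fun _ : Fin 3 => ℝ) 0).trans
        (MeasurableEquiv.prodCongr (MeasurableEquiv.refl ℝ) (MeasurableEquiv.finTwoArrow)))
    with hF_def
  have hFval : ∀ y : EuclideanSpace ℝ (Fin 3), F y = (y 0, y 1, y 2) := fun y => rfl
  have hF : MeasurePreserving F volume volume := by
    have h1 := EuclideanSpace.volume_preserving_symm_measurableEquiv_toLp (Fin 3)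
    have h2 := volume_preserving_piFinSuccAbove (fun _ : Fin 3 => ℝ) 0
    have h3 := (MeasurePreserving.id (volume : Measure ℝ)).prod
      (volume_preserving_finTwoArrow ℝ)
    exact (h3.comp h2).comp h1
  set β : ℝ := (α + 2) / 2 with hβ_def
  set g : ℝ × ℝ × ℝ → ℝ :=
    fun p => (1 - p.1) * ((1 - p.1) ^ 2 + p.2.1 ^ 2 + p.2.2 ^ 2) ^ (-β) with hg_def
  set S : Set (ℝ × ℝ × ℝ) := {p | p.1 ^ 2 + p.2.1 ^ 2 + p.2.2 ^ 2 < 1} with hS_def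
  have hS : MeasurableSet S := measurableSet_lt (by fun_prop) measurable_const
  have hptwise : ∀ y : EuclideanSpace ℝ (Fin 3), ⟪x₀ - y, x₀⟫ / ‖x₀ - y‖ ^ (α + 2) = g (F y) := by
    intro y
    have hin : ⟪x₀ - y, x₀⟫ = 1 - y 0 := by
      rw [hx₀_def]
      rw [EuclideanSpace.inner_single_right 0 (1:ℝ) (EuclideanSpace.single (0 : Fin 3) (1:ℝ) - y)]
      simp
    have hnorm : ‖x₀ - y‖ = Real.sqrt ((1 - y 0) ^ 2 + (y 1) ^ 2 + (y 2) ^ 2) := by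
      rw [EuclideanSpace.norm_eq]
      congr 1
      rw [Fin.sum_univ_three]
      simp only [hx₀_def]
      have h0' : (EuclideanSpace.single (0 : Fin 3) (1:ℝ) - y) 0 = 1 - y 0 := by
        simp [EuclideanSpace.single_apply]
      have h1' : (EuclideanSpace.single (0 : Fin 3) (1:ℝ) - y) 1 = - y 1 := by
        simp [EuclideanSpace.single_apply]
      have h2' : (EuclideanSpace.single (0 : Fin 3) (1:ℝ) - y) 2 = - y 2 := by
        simp [EuclideanSpace.single_apply]
      rw [h0', h1', h2']
      simp only [Real.norm_eq_abs, sq_abs]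
      ring
    rw [hin, hnorm, hFval y, hg_def]
    set Q : ℝ := (1 - y 0) ^ 2 + (y 1) ^ 2 + (y 2) ^ 2 with hQ_def
    have hQ0 : 0 ≤ Q := by positivity
    have hfold : (1 - y 0) ^ 2 + (y 1) ^ 2 + (y 2) ^ 2 = Q := hQ_def.symm
    show (1 - y 0) / Real.sqrt Q ^ (α + 2) =
      (1 - y 0) * ((1 - y 0) ^ 2 + (y 1) ^ 2 + (y 2) ^ 2) ^ (-β)
    rw [hfold]
    rcases eq_or_lt_of_le hQ0 with hQ | hQ
    · have hy0 : 1 - y 0 = 0 := by nlinarith [sq_nonneg (1 - y 0), sq_nonneg (y 1), sq_nonneg (y 2)]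
      rw [hy0]
      simp
    · have hs : Real.sqrt Q ^ (α + 2) = Q ^ β := by
        rw [Real.sqrt_eq_rpow, ← Real.rpow_mul hQ0]
        congr 1
        rw [hβ_def]; ring
      rw [hs, Real.rpow_neg (le_of_lt hQ), div_eq_mul_inv]
  have hpre : ⇑F ⁻¹' S = Metric.ball (0 : EuclideanSpace ℝ (Fin 3)) 1 := by
    ext y
    simp only [Set.mem_preimage, mem_ball_zero_iff]
    rw [hFval y]
    have hmem : (y 0, y 1, y 2) ∈ S ↔ (y 0) ^ 2 + (y 1) ^ 2 + (y 2) ^ 2 < 1 := Iff.rfl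
    rw [hmem, EuclideanSpace.norm_eq]
    rw [show ∑ i, ‖y i‖ ^ 2 = (y 0) ^ 2 + (y 1) ^ 2 + (y 2) ^ 2 by
      rw [Fin.sum_univ_three]; simp [Real.norm_eq_abs, sq_abs]]
    rw [Real.sqrt_lt' one_pos]
    norm_num
  calc (∫ y in Metric.ball (0 : EuclideanSpace ℝ (Fin 3)) 1, ⟪x₀ - y, x₀⟫ / ‖x₀ - y‖ ^ (α + 2))
      = ∫ y in Metric.ball (0 : EuclideanSpace ℝ (Fin 3)) 1, g (F y) :=
        setIntegral_congr_fun measurableSet_ball (fun y _ => hptwise y)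
    _ = ∫ p in S, g p := by
        rw [← hpre]
        exact hF.setIntegral_preimage_emb F.measurableEmbedding g S
    _ = ∫ p, Set.indicator S g p := (MeasureTheory.integral_indicator hS).symm
    _ = 2 * Real.pi * 2 ^ (2 - α) / ((4 - α) * (2 - α)) := by
        simp only [hg_def, hβ_def, hS_def]
        exact prod_eval α h0 h2
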